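/- Let f : Ω → ℝ be convex on an open convex set Ω ⊆ ℝⁿ and let x̄ ∈ Ω. If v is an extreme point of the subdifferential ∂f(x̄), then v belongs to the reachable gradient ∂*f(x̄), i.e. there exists a sequence xₖ → x̄ of differentiability points of f with ∇f(xₖ) → v. -/

import Mathlib

open scoped RealInnerProductSpace
open Filter Set Metric MeasureTheory


section aux
variable {E : Type*} [NormedAddCommGroup E] [InnerProductSpace ℝ E]

lemma clarke_subgrad {E : Type*} [NormedAddCommGroup E] [InnerProductSpace ℝ E]
    {Ω : Set E} {f : E → ℝ} (hf : ConvexOn ℝ Ω f) {x y : E} (hx : x ∈ Ω) (hy : y ∈ Ω)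
    {φ : E →L[ℝ] ℝ} (hφ : HasFDerivAt f φ x) : φ (y - x) ≤ f y - f x := by
  set g : ℝ →ᵃ[ℝ] E := AffineMap.lineMap x y with hgdef
  have hg : ConvexOn ℝ (g ⁻¹' Ω) (f ∘ g) := hf.comp_affineMap g
  have h0 : (0:ℝ) ∈ g ⁻¹' Ω := by simp [hgdef, hx]
  have h1 : (1:ℝ) ∈ g ⁻¹' Ω := by simp [hgdef, hy]
  have h₁ : HasDerivAt (fun t : ℝ => g t) (y - x) 0 := by
    have : (fun t : ℝ => g t) = fun t : ℝ => t • (y - x) + x := by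
      funext t; simp [hgdef, AffineMap.lineMap_apply_module]; module
    rw [this]
    simpa using ((hasDerivAt_id (0:ℝ)).smul_const (y - x)).add_const x
  have hd : HasDerivAt (f ∘ g) (φ (y - x)) 0 := by
    have hφ' : HasFDerivAt f φ (g 0) := by simpa [hgdef] using hφ
    simpa using hφ'.comp_hasDerivAt 0 h₁
  have := hg.le_slope_of_hasDerivAt h0 h1 one_pos hd
  simpa [slope_def_field, hgdef] using this
end aux

section aux2
open Set
variable {E : Type*} [NormedAddCommGroup E] [NormedSpace ℝ E]

variable {E : Type*} [NormedAddCommGroup E] [NormedSpace ℝ E]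

lemma isCompact_convexJoin {s t : Set E} (hs : IsCompact s) (ht : IsCompact t) :
    IsCompact (convexJoin ℝ s t) := by
  have h : convexJoin ℝ s t =
      (fun p : ℝ × E × E => (1 - p.1) • p.2.1 + p.1 • p.2.2) '' (Icc (0:ℝ) 1 ×ˢ s ×ˢ t) := by
    ext z
    simp only [mem_convexJoin, segment_eq_image, mem_image, mem_prod, Prod.exists]
    constructor
    · rintro ⟨a, ha, b, hb, θ, hθ, rfl⟩; exact ⟨θ, a, b, ⟨hθ, ha, hb⟩, rfl⟩
    · rintro ⟨θ, a, b, ⟨hθ, ha, hb⟩, rfl⟩; exact ⟨a, ha, b, hb, θ, hθ, rfl⟩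
  rw [h]
  exact (isCompact_Icc.prod (hs.prod ht)).image (by fun_prop)

lemma extremePoints_of_subset {s t : Set E} {v : E}
    (hst : t ⊆ s) (hv : v ∈ Set.extremePoints ℝ s) (hvt : v ∈ t) :
    v ∈ Set.extremePoints ℝ t :=
  ⟨hvt, fun _ hx _ hy h => hv.2 (hst hx) (hst hy) h⟩

lemma conv_biUnion {ι : Type*} (I : Finset ι) (C : ι → Set E)
    (hconv : ∀ i ∈ I, Convex ℝ (C i)) (hcomp : ∀ i ∈ I, IsCompact (C i))
    (hne : ∀ i ∈ I, (C i).Nonempty) :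
    IsCompact (convexHull ℝ (⋃ i ∈ I, C i)) ∧
      ∀ v ∈ Set.extremePoints ℝ (convexHull ℝ (⋃ i ∈ I, C i)), ∃ i ∈ I, v ∈ C i := by
  classical
  induction I using Finset.induction_on with
  | empty => simp
  | @insert a I ha ih =>
    have hCa : Convex ℝ (C a) := hconv a (Finset.mem_insert_self _ _)
    have hCac : IsCompact (C a) := hcomp a (Finset.mem_insert_self _ _)
    have hCane : (C a).Nonempty := hne a (Finset.mem_insert_self _ _)
    obtain ⟨ihc, ihe⟩ := ih (fun i hi => hconv i (Finset.mem_insert_of_mem hi))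
      (fun i hi => hcomp i (Finset.mem_insert_of_mem hi))
      (fun i hi => hne i (Finset.mem_insert_of_mem hi))
    have hins : (⋃ i ∈ insert a I, C i) = C a ∪ ⋃ i ∈ I, C i := by
      simp [Set.biUnion_insert]
    rcases (⋃ i ∈ I, C i).eq_empty_or_nonempty with hU | hU
    · rw [hins, hU, Set.union_empty, hCa.convexHull_eq]
      exact ⟨hCac, fun v hv => ⟨a, Finset.mem_insert_self _ _, extremePoints_subset hv⟩⟩
    · have hB'ne : (convexHull ℝ (⋃ i ∈ I, C i)).Nonempty := hU.mono (subset_convexHull _ _)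
      have hkey : convexHull ℝ (⋃ i ∈ insert a I, C i)
          = convexJoin ℝ (C a) (convexHull ℝ (⋃ i ∈ I, C i)) := by
        rw [hins, ← convexHull_convexHull_union_right,
          hCa.convexHull_union (convex_convexHull ℝ _) hCane hB'ne]
      rw [hkey]
      refine ⟨isCompact_convexJoin hCac ihc, fun v hv => ?_⟩
      obtain ⟨p, hp, q, hq, hseg⟩ := mem_convexJoin.1 hv.1
      have hpJ : p ∈ convexJoin ℝ (C a) (convexHull ℝ (⋃ i ∈ I, C i)) :=
        subset_convexJoin_left hB'ne hp
      have hqJ : q ∈ convexJoin ℝ (C a) (convexHull ℝ (⋃ i ∈ I, C i)) :=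
        subset_convexJoin_right hCane hq
      rcases (mem_extremePoints_iff_forall_segment.1 hv).2 p hpJ q hqJ hseg with h | h
      · exact ⟨a, Finset.mem_insert_self _ _, h ▸ hp⟩
      · have hv' : v ∈ Set.extremePoints ℝ (convexHull ℝ (⋃ i ∈ I, C i)) :=
          extremePoints_of_subset (subset_convexJoin_right hCane) hv (h ▸ hq)
        obtain ⟨i, hi, hvi⟩ := ihe v hv'
        exact ⟨i, Finset.mem_insert_of_mem hi, hvi⟩
lemma milman [ProperSpace E] {S : Set E} (hS : IsCompact S) {v : E}
    (hv : v ∈ Set.extremePoints ℝ (closure (convexHull ℝ S))) : v ∈ S := by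
  classical
  rw [← hS.isClosed.closure_eq]
  refine Metric.mem_closure_iff.2 fun ε hε => ?_
  -- cover S by balls of radius ε/2 centered in S
  obtain ⟨t, ht⟩ := hS.elim_finite_subcover (fun c : S => ball (c : E) (ε/2))
    (fun _ => isOpen_ball) (fun x hx => mem_iUnion.2 ⟨⟨x, hx⟩, mem_ball_self (by linarith)⟩)
  set C : S → Set E := fun c => closure (convexHull ℝ (S ∩ closedBall (c : E) (ε/2))) with hC
  have hCsub : ∀ c : S, C c ⊆ closedBall (c : E) (ε/2) := fun c =>
    closure_minimal (convexHull_min inter_subset_right (convex_closedBall _ _)) isClosed_closedBall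
  have hconv : ∀ c ∈ t, Convex ℝ (C c) := fun c _ => (convex_convexHull ℝ _).closure
  have hcomp : ∀ c ∈ t, IsCompact (C c) := fun c _ =>
    (isCompact_closedBall (c : E) (ε/2)).of_isClosed_subset isClosed_closure (hCsub c)
  have hCS : ∀ c : S, C c ⊆ closure (convexHull ℝ S) := fun c =>
    closure_mono (convexHull_mono inter_subset_left)
  -- if t covers S, each center is in S; need nonempty: c ∈ S ∩ closedBall c
  have hne : ∀ c ∈ t, (C c).Nonempty := fun c _ =>
    ⟨c, subset_closure (subset_convexHull ℝ _ ⟨c.2, mem_closedBall_self (by linarith)⟩)⟩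
  obtain ⟨hK, hKe⟩ := conv_biUnion t C hconv hcomp hne
  have hEq : closure (convexHull ℝ S) = convexHull ℝ (⋃ c ∈ t, C c) := by
    apply le_antisymm
    · refine closure_minimal (convexHull_min (fun x hx => ?_) (convex_convexHull ℝ _))
        hK.isClosed
      obtain ⟨c, hct, hxc⟩ := mem_iUnion₂.1 (ht hx)
      exact subset_convexHull ℝ _ <| mem_iUnion₂.2 ⟨c, hct,
        subset_closure (subset_convexHull ℝ _ ⟨hx, ball_subset_closedBall hxc⟩)⟩
    · exact convexHull_min (iUnion₂_subset fun c _ => hCS c)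
        (convex_convexHull ℝ _).closure
  rw [hEq] at hv
  obtain ⟨c, hct, hvc⟩ := hKe v hv
  exact ⟨(c : E), c.2, lt_of_le_of_lt (hCsub c hvc) (by linarith)⟩

end aux2


set_option maxHeartbeats 2000000 in
theorem stmt_9 {n : ℕ} (Ω : Set (EuclideanSpace ℝ (Fin n))) (hΩo : IsOpen Ω)
    (hΩc : Convex ℝ Ω) (f : EuclideanSpace ℝ (Fin n) → ℝ) (hf : ConvexOn ℝ Ω f)
    (x₀ : EuclideanSpace ℝ (Fin n)) (hx : x₀ ∈ Ω) (v : EuclideanSpace ℝ (Fin n))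
    (hv : v ∈ Set.extremePoints ℝ
      {w : EuclideanSpace ℝ (Fin n) | ∀ x ∈ Ω, f x - f x₀ ≥ ⟪w, x - x₀⟫}) :
    ∃ xs : ℕ → EuclideanSpace ℝ (Fin n),
      (∀ k, xs k ∈ Ω ∧ DifferentiableAt ℝ f (xs k)) ∧
      Tendsto xs atTop (nhds x₀) ∧
      Tendsto (fun k => gradient f (xs k)) atTop (nhds v) := by
  classical
  rcases subsingleton_or_nontrivial (EuclideanSpace ℝ (Fin n)) with hsub | hnt
  · -- trivial case
    have hfc : f = fun _ => f x₀ := funext fun x => by rw [Subsingleton.elim x x₀]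
    refine ⟨fun _ => x₀, fun k => ⟨hx, by rw [hfc]; exact differentiableAt_const _⟩,
      tendsto_const_nhds, ?_⟩
    have h : gradient f x₀ = v := Subsingleton.elim _ _
    simp only [h]
    exact tendsto_const_nhds
  -- nontrivial case
  set A : Set (EuclideanSpace ℝ (Fin n)) := {w : EuclideanSpace ℝ (Fin n) | ∀ x ∈ Ω, f x - f x₀ ≥ ⟪w, x - x₀⟫} with hA
  set S : Set (EuclideanSpace ℝ (Fin n)) := {z : EuclideanSpace ℝ (Fin n) | ∃ xs : ℕ → EuclideanSpace ℝ (Fin n),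
      (∀ k, xs k ∈ Ω ∧ DifferentiableAt ℝ f (xs k)) ∧
      Tendsto xs atTop (nhds x₀) ∧
      Tendsto (fun k => gradient f (xs k)) atTop (nhds z)} with hS
  show v ∈ S
  -- Lipschitz ball
  obtain ⟨R, hR, hRΩ⟩ := Metric.isOpen_iff.1 hΩo x₀ hx
  have hball2 : closedBall x₀ (R/2) ⊆ Ω := (closedBall_subset_ball (by linarith)).trans hRΩ
  have hbRΩ : ball x₀ (R/2) ⊆ Ω := (ball_subset_ball (by linarith)).trans hRΩ
  have hfb : ConvexOn ℝ (ball x₀ (R/2)) f := hf.subset hbRΩ (convex_ball _ _)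
  have hbd : Bornology.IsBounded (f '' ball x₀ (R/2)) := by
    refine ((hball2.trans (subset_rfl)) |> fun h => ?_)
    have hcomp : IsCompact (f '' closedBall x₀ (R/2)) :=
      (isCompact_closedBall _ _).image_of_continuousOn
        ((hf.continuousOn hΩo).mono hball2)
    exact hcomp.isBounded.subset (image_mono ball_subset_closedBall)
  obtain ⟨K, hK⟩ := hfb.exists_lipschitzOnWith_of_isBounded (by linarith : R/4 < R/2) hbd
  set ρ : ℝ := R/4 with hρdef
  have hρ : 0 < ρ := by positivity
  have hlip : LipschitzOnWith K f (ball x₀ ρ) := hK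
  have hballΩ : ball x₀ ρ ⊆ Ω := (ball_subset_ball (by linarith)).trans hRΩ
  -- differentiability points are dense in ball x₀ ρ
  have hdense : ∀ y : EuclideanSpace ℝ (Fin n), ∀ δ : ℝ, 0 < δ → ball y δ ⊆ ball x₀ ρ →
      ∃ x ∈ ball y δ, DifferentiableAt ℝ f x := by
    intro y δ hδ hsub
    by_contra hcon
    push_neg at hcon
    have hae := hlip.ae_differentiableWithinAt_of_mem (μ := volume)
    have hz : ∀ᵐ x ∂(volume : Measure (EuclideanSpace ℝ (Fin n))), x ∉ ball y δ := by
      filter_upwards [hae] with x hx' hxy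
      exact hcon x hxy <| ((hx' (hsub hxy)).differentiableAt
        (isOpen_ball.mem_nhds (hsub hxy)))
    have : (volume : Measure (EuclideanSpace ℝ (Fin n))) (ball y δ) = 0 := by
      simpa only [not_not, Set.setOf_mem_eq] using (ae_iff.1 hz)
    exact absurd this (measure_ball_pos _ _ hδ).ne'
  -- gradient facts
  have hgradinner : ∀ (x y : EuclideanSpace ℝ (Fin n)), ⟪gradient f x, y⟫ = fderiv ℝ f x y := fun x y => by
    rw [gradient, ← InnerProductSpace.toDual_apply_apply, LinearIsometryEquiv.apply_symm_apply]
  have hgradnorm : ∀ x ∈ ball x₀ ρ, DifferentiableAt ℝ f x → ‖gradient f x‖ ≤ K := by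
    intro x hxb hdx
    have h1 : ‖gradient f x‖ = ‖fderiv ℝ f x‖ := by
      rw [gradient]; exact LinearIsometryEquiv.norm_map _ _
    rw [h1]
    exact hdx.hasFDerivAt.le_of_lipschitzOn (isOpen_ball.mem_nhds hxb) hlip
  have hsubgrad : ∀ x ∈ Ω, DifferentiableAt ℝ f x → ∀ y ∈ Ω,
      ⟪gradient f x, y - x⟫ ≤ f y - f x := by
    intro x hxΩ hdx y hyΩ
    rw [hgradinner]
    exact clarke_subgrad hf hxΩ hyΩ hdx.hasFDerivAt
  -- S ⊆ A
  have hSsubA : S ⊆ A := by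
    rintro z ⟨xs, hmem, hx0, hgr⟩ x hxΩ
    have hcont : ContinuousAt f x₀ := (hf.continuousOn hΩo).continuousAt (hΩo.mem_nhds hx)
    have h1 : Tendsto (fun k => f x - f (xs k)) atTop (nhds (f x - f x₀)) :=
      tendsto_const_nhds.sub (hcont.tendsto.comp hx0)
    have h2 : Tendsto (fun k => ⟪gradient f (xs k), x - xs k⟫) atTop (nhds ⟪z, x - x₀⟫) :=
      hgr.inner (tendsto_const_nhds.sub hx0)
    exact le_of_tendsto_of_tendsto' h2 h1 fun k =>
      hsubgrad (xs k) (hmem k).1 (hmem k).2 x hxΩ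
  -- S bounded
  have hSbd : S ⊆ closedBall 0 K := by
    rintro z ⟨xs, hmem, hx0, hgr⟩
    rw [mem_closedBall_zero_iff]
    have hev : ∀ᶠ k in atTop, ‖gradient f (xs k)‖ ≤ K := by
      filter_upwards [hx0 (ball_mem_nhds x₀ hρ)] with k hk
      exact hgradnorm _ hk (hmem k).2
    exact le_of_tendsto hgr.norm hev
  -- S closed
  have hSclosed : IsClosed S := by
    refine isClosed_of_closure_subset fun z hz => ?_
    have hpick : ∀ k : ℕ, ∃ y : EuclideanSpace ℝ (Fin n),
        (y ∈ Ω ∧ DifferentiableAt ℝ f y) ∧ dist y x₀ < 1/((k:ℝ)+1) ∧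
          dist (gradient f y) z < 2/((k:ℝ)+1) := by
      intro k
      obtain ⟨z', hz'S, hz'd⟩ := Metric.mem_closure_iff.1 hz (1/((k:ℝ)+1)) (by positivity)
      obtain ⟨xs, hmem, hx0, hgr⟩ := hz'S
      have e1 : ∀ᶠ m in atTop, xs m ∈ ball x₀ (1/((k:ℝ)+1)) :=
        hx0 (ball_mem_nhds _ (by positivity))
      have e2 : ∀ᶠ m in atTop, gradient f (xs m) ∈ ball z' (1/((k:ℝ)+1)) :=
        hgr (ball_mem_nhds _ (by positivity))
      obtain ⟨m, hm1, hm2⟩ := (e1.and e2).exists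
      refine ⟨xs m, hmem m, hm1, ?_⟩
      calc dist (gradient f (xs m)) z
          ≤ dist (gradient f (xs m)) z' + dist z' z := dist_triangle _ _ _
        _ < 1/((k:ℝ)+1) + 1/((k:ℝ)+1) := add_lt_add hm2 (by rwa [dist_comm] at hz'd)
        _ = 2/((k:ℝ)+1) := by ring
    choose y hy1 hy2 hy3 using hpick
    have hlim : Tendsto (fun k : ℕ => 1/((k:ℝ)+1)) atTop (nhds 0) :=
      tendsto_one_div_add_atTop_nhds_zero_nat
    have hlim2 : Tendsto (fun k : ℕ => 2/((k:ℝ)+1)) atTop (nhds 0) := by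
      have h2 := hlim.const_mul (2:ℝ)
      simpa [mul_one_div, div_eq_mul_inv] using h2
    refine ⟨y, hy1, ?_, ?_⟩
    · rw [tendsto_iff_dist_tendsto_zero]
      exact squeeze_zero (fun k => dist_nonneg) (fun k => (hy2 k).le) hlim
    · rw [tendsto_iff_dist_tendsto_zero]
      exact squeeze_zero (fun k => dist_nonneg) (fun k => (hy3 k).le) hlim2
  -- key estimate
  have hC : ∀ w ∈ A, ∀ u : EuclideanSpace ℝ (Fin n), ‖u‖ = 1 → ∃ z ∈ S, ⟪w, u⟫ ≤ ⟪z, u⟫ := by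
    intro w hw u hu
    have hpick : ∀ k : ℕ, ∃ x : EuclideanSpace ℝ (Fin n), DifferentiableAt ℝ f x ∧
        x ∈ ball x₀ ρ ∧ dist x (x₀ + (ρ/(2*((k:ℝ)+1))) • u) < ρ/(2*((k:ℝ)+1)*((k:ℝ)+1)) ∧
        dist x x₀ < ρ/((k:ℝ)+1) := by
      intro k
      have hs : (0:ℝ) < ρ/(2*((k:ℝ)+1)) := by positivity
      have hδ : (0:ℝ) < ρ/(2*((k:ℝ)+1)*((k:ℝ)+1)) := by positivity
      have hk1 : (1:ℝ) ≤ (k:ℝ)+1 := by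
        have : (0:ℝ) ≤ (k:ℝ) := Nat.cast_nonneg k
        linarith
      have hcenter : dist (x₀ + (ρ/(2*((k:ℝ)+1))) • u) x₀ = ρ/(2*((k:ℝ)+1)) := by
        rw [dist_eq_norm]
        have hh : x₀ + (ρ/(2*((k:ℝ)+1))) • u - x₀ = (ρ/(2*((k:ℝ)+1))) • u := by abel
        rw [hh, norm_smul, hu, mul_one, Real.norm_eq_abs, abs_of_pos hs]
      have hdistball : ∀ p ∈ ball (x₀ + (ρ/(2*((k:ℝ)+1))) • u) (ρ/(2*((k:ℝ)+1)*((k:ℝ)+1))),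
          dist p x₀ < ρ/((k:ℝ)+1) := by
        intro p hp
        rw [mem_ball] at hp
        have htri := dist_triangle p (x₀ + (ρ/(2*((k:ℝ)+1))) • u) x₀
        have hle : ρ/(2*((k:ℝ)+1)*((k:ℝ)+1)) ≤ ρ/(2*((k:ℝ)+1)) := by
          rw [div_le_div_iff₀ (by positivity) (by positivity)]
          nlinarith [mul_nonneg (mul_nonneg hρ.le (by positivity : (0:ℝ) ≤ 2*((k:ℝ)+1)))
            (by positivity : (0:ℝ) ≤ (k:ℝ))]
        calc dist p x₀ ≤ dist p (x₀ + (ρ/(2*((k:ℝ)+1))) • u)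
              + dist (x₀ + (ρ/(2*((k:ℝ)+1))) • u) x₀ := htri
          _ < ρ/(2*((k:ℝ)+1)*((k:ℝ)+1)) + ρ/(2*((k:ℝ)+1)) := by
              rw [hcenter]; exact add_lt_add_left hp _
          _ ≤ ρ/(2*((k:ℝ)+1)) + ρ/(2*((k:ℝ)+1)) := add_le_add_left hle _
          _ = ρ/((k:ℝ)+1) := by field_simp; ring
      have hsub : ball (x₀ + (ρ/(2*((k:ℝ)+1))) • u) (ρ/(2*((k:ℝ)+1)*((k:ℝ)+1))) ⊆ ball x₀ ρ := by
        intro p hp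
        rw [mem_ball]
        refine lt_of_lt_of_le (hdistball p hp) ?_
        rw [div_le_iff₀ (by positivity)]
        nlinarith
      obtain ⟨x', hxb, hdx⟩ := hdense _ _ hδ hsub
      exact ⟨x', hdx, hsub hxb, mem_ball.1 hxb, hdistball _ hxb⟩
    choose xk hdk hbk hek hxk using hpick
    have hxΩ : ∀ k, xk k ∈ Ω := fun k => hballΩ (hbk k)
    -- the key per-k inequality
    have hkey : ∀ k : ℕ, -((K:ℝ) + ‖w‖)/((k:ℝ)+1) ≤ ⟪gradient f (xk k) - w, u⟫ := by
      intro k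
      set s : ℝ := ρ/(2*((k:ℝ)+1)) with hsdef
      set δ : ℝ := ρ/(2*((k:ℝ)+1)*((k:ℝ)+1)) with hδdef
      have hs : (0:ℝ) < s := by rw [hsdef]; positivity
      have hδs : δ = s * (1/((k:ℝ)+1)) := by rw [hsdef, hδdef]; field_simp
      set g : EuclideanSpace ℝ (Fin n) := gradient f (xk k) with hgdef
      set e : EuclideanSpace ℝ (Fin n) := xk k - x₀ - s • u with hedef
      have hd : xk k - x₀ = s • u + e := by rw [hedef]; abel
      have hnorme : ‖e‖ < δ := by
        have h := hek k
        rw [dist_eq_norm] at h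
        have : xk k - (x₀ + s • u) = e := by rw [hedef]; abel
        rwa [this] at h
      -- monotonicity inequality
      have h1 : ⟪g, x₀ - xk k⟫ ≤ f x₀ - f (xk k) := hsubgrad (xk k) (hxΩ k) (hdk k) x₀ hx
      have h2 : ⟪w, xk k - x₀⟫ ≤ f (xk k) - f x₀ := hw (xk k) (hxΩ k)
      have h1' : -⟪g, xk k - x₀⟫ ≤ f x₀ - f (xk k) := by
        rwa [← neg_sub (xk k) x₀, inner_neg_right] at h1
      have hmono : 0 ≤ ⟪g - w, xk k - x₀⟫ := by
        rw [inner_sub_left]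
        linarith
      have hexpand : ⟪g - w, xk k - x₀⟫ = s * ⟪g - w, u⟫ + ⟪g - w, e⟫ := by
        rw [hd, inner_add_right, real_inner_smul_right]
      have hbound : |⟪g - w, e⟫| ≤ ((K:ℝ) + ‖w‖) * δ := by
        calc |⟪g - w, e⟫| ≤ ‖g - w‖ * ‖e‖ := abs_real_inner_le_norm _ _
          _ ≤ ((K:ℝ) + ‖w‖) * δ := by
            refine mul_le_mul ?_ hnorme.le (norm_nonneg _) (by positivity)
            calc ‖g - w‖ ≤ ‖g‖ + ‖w‖ := norm_sub_le _ _
              _ ≤ (K:ℝ) + ‖w‖ := add_le_add_left (hgradnorm _ (hbk k) (hdk k)) _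
      have hKw : (0:ℝ) ≤ (K:ℝ) + ‖w‖ := by positivity
      have hstep : s * (-((K:ℝ) + ‖w‖)/((k:ℝ)+1)) ≤ s * ⟪g - w, u⟫ := by
        have habs := abs_le.1 hbound
        have : -(((K:ℝ) + ‖w‖) * δ) ≤ s * ⟪g - w, u⟫ := by linarith [hexpand ▸ hmono]
        calc s * (-((K:ℝ) + ‖w‖)/((k:ℝ)+1)) = -(((K:ℝ) + ‖w‖) * δ) := by
              rw [hδs]; field_simp
          _ ≤ s * ⟪g - w, u⟫ := this
      exact le_of_mul_le_mul_left hstep hs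
    -- gradients are bounded, extract convergent subsequence
    have hgb : ∀ k : ℕ, gradient f (xk k) ∈ closedBall (0 : EuclideanSpace ℝ (Fin n)) K := by
      intro k
      rw [mem_closedBall_zero_iff]
      exact hgradnorm _ (hbk k) (hdk k)
    obtain ⟨z, hzball, φ, hφ, hconv⟩ :=
      (isCompact_closedBall (0 : EuclideanSpace ℝ (Fin n)) K).tendsto_subseq hgb
    have hxk0 : Tendsto xk atTop (nhds x₀) := by
      rw [tendsto_iff_dist_tendsto_zero]
      have hlim : Tendsto (fun k : ℕ => ρ/((k:ℝ)+1)) atTop (nhds 0) := by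
        have h2 := tendsto_one_div_add_atTop_nhds_zero_nat.const_mul ρ
        simpa [mul_one_div, div_eq_mul_inv] using h2
      exact squeeze_zero (fun k => dist_nonneg) (fun k => (hxk k).le) hlim
    have hzS : z ∈ S := by
      refine ⟨fun k => xk (φ k), fun k => ⟨hxΩ (φ k), hdk (φ k)⟩, ?_, hconv⟩
      exact hxk0.comp hφ.tendsto_atTop
    refine ⟨z, hzS, ?_⟩
    have hinlim : Tendsto (fun k => ⟪gradient f (xk (φ k)) - w, u⟫) atTop (nhds ⟪z - w, u⟫) :=
      ((hconv.sub tendsto_const_nhds).inner tendsto_const_nhds)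
    have hclim : Tendsto (fun k : ℕ => -((K:ℝ) + ‖w‖)/((φ k:ℝ)+1)) atTop (nhds 0) := by
      have h2 : Tendsto (fun k : ℕ => -((K:ℝ) + ‖w‖)/((k:ℝ)+1)) atTop (nhds 0) := by
        have h3 := tendsto_one_div_add_atTop_nhds_zero_nat.const_mul (-((K:ℝ) + ‖w‖))
        simpa [mul_one_div, div_eq_mul_inv] using h3
      exact h2.comp hφ.tendsto_atTop
    have hzw : (0:ℝ) ≤ ⟪z - w, u⟫ := by
      have := le_of_tendsto_of_tendsto' hclim hinlim (fun k => hkey (φ k))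
      linarith
    rw [inner_sub_left] at hzw
    linarith
  -- A is convex and closed
  have hAconv : Convex ℝ A := by
    intro w1 hw1 w2 hw2 a b ha hb hab
    intro x hxΩ
    have h1 := hw1 x hxΩ
    have h2 := hw2 x hxΩ
    have hexp : ⟪a • w1 + b • w2, x - x₀⟫ = a * ⟪w1, x - x₀⟫ + b * ⟪w2, x - x₀⟫ := by
      rw [inner_add_left, real_inner_smul_left, real_inner_smul_left]
    rw [ge_iff_le] at h1 h2 ⊢
    rw [hexp]
    calc a * ⟪w1, x - x₀⟫ + b * ⟪w2, x - x₀⟫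
        ≤ a * (f x - f x₀) + b * (f x - f x₀) :=
          add_le_add (mul_le_mul_of_nonneg_left h1 ha) (mul_le_mul_of_nonneg_left h2 hb)
      _ = f x - f x₀ := by rw [← add_mul, hab, one_mul]
  have hAclosed : IsClosed A := by
    have hrepr : A = ⋂ x ∈ Ω, {w : EuclideanSpace ℝ (Fin n) | ⟪w, x - x₀⟫ ≤ f x - f x₀} := by
      ext w; simp [hA, ge_iff_le]
    rw [hrepr]
    exact isClosed_biInter fun x hxΩ =>
      isClosed_le (continuous_id.inner continuous_const) continuous_const
  -- A = closure (convexHull ℝ S)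
  have hTA : closure (convexHull ℝ S) ⊆ A :=
    closure_minimal (convexHull_min hSsubA hAconv) hAclosed
  have hAT : A ⊆ closure (convexHull ℝ S) := by
    intro w hw
    by_contra hwT
    obtain ⟨l, c, hlw, hlT⟩ := geometric_hahn_banach_point_closed
      ((convex_convexHull ℝ S).closure) isClosed_closure hwT
    set a := (InnerProductSpace.toDual ℝ (EuclideanSpace ℝ (Fin n))).symm l with hadef
    have hal : ∀ y, ⟪a, y⟫ = l y := fun y => by
      rw [hadef, ← InnerProductSpace.toDual_apply_apply, LinearIsometryEquiv.apply_symm_apply]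
    rcases eq_or_ne a 0 with h0 | h0
    · obtain ⟨x', hx'⟩ := exists_ne (0 : EuclideanSpace ℝ (Fin n))
      have hu : ‖(‖x'‖⁻¹ • x' : EuclideanSpace ℝ (Fin n))‖ = 1 := by
        simp [norm_smul, inv_mul_cancel₀ (norm_ne_zero_iff.2 hx')]
      obtain ⟨z, hzS, -⟩ := hC w hw (‖x'‖⁻¹ • x') hu
      have hz : c < l z := hlT z (subset_closure (subset_convexHull ℝ S hzS))
      have h1 : l z = 0 := by rw [← hal z, h0, inner_zero_left]
      have h2 : l w = 0 := by rw [← hal w, h0, inner_zero_left]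
      linarith
    · have hu : ‖(-(‖a‖⁻¹ • a) : EuclideanSpace ℝ (Fin n))‖ = 1 := by
        simp [norm_smul, inv_mul_cancel₀ (norm_ne_zero_iff.2 h0)]
      obtain ⟨z, hzS, hz⟩ := hC w hw (-(‖a‖⁻¹ • a)) hu
      rw [inner_neg_right, inner_neg_right, real_inner_smul_right, real_inner_smul_right,
        neg_le_neg_iff] at hz
      have hz' : ⟪z, a⟫ ≤ ⟪w, a⟫ := by
        have hpos : (0:ℝ) < ‖a‖⁻¹ := inv_pos.2 (norm_pos_iff.2 h0)
        exact le_of_mul_le_mul_left hz hpos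
      have hcz : c < l z := hlT z (subset_closure (subset_convexHull ℝ S hzS))
      have e1 : (inner ℝ a z : ℝ) = inner ℝ z a := real_inner_comm z a
      have e2 : (inner ℝ a w : ℝ) = inner ℝ w a := real_inner_comm w a
      rw [← hal z] at hcz
      rw [← hal w] at hlw
      linarith
  have hScomp : IsCompact S := (isCompact_closedBall (0:EuclideanSpace ℝ (Fin n)) K).of_isClosed_subset hSclosed hSbd
  exact milman hScomp (extremePoints_of_subset hTA hv (hAT hv.1))
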